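/- Let (S, ∂, ∫) be a commutative integro-differential ring with evaluation E := id − ∫∘∂. Let Z ⊆ ker ∂ be any set of constants and let J := Ideal.span Z be the ring ideal of S generated by Z. Then: (i) ∂(J) ⊆ J and ∫(J) ⊆ J, i.e., J is an integro-differential ideal; (ii) for every f ∈ S with ∂ f ∈ J one has f − E f ∈ J; in particular, for every f ∈ S with ∂ f ∈ J there exists a constant c ∈ ker ∂ with f − c ∈ J, so every constant of the quotient ring S/J is the image of a constant of S. -/

import Mathlib

/-- In a commutative integro-differential ring `(S, der, intg)` with
evaluation `E = id - intg ∘ der`, the ideal generated by any set `Z` of constants is an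
integro-differential ideal, and for any `f` with `der f ∈ J` one has `f - E f ∈ J`;
in particular every constant of the quotient `S/J` is the image of a constant of `S`. -/
theorem stmt_13 {S : Type*} [CommRing S] (der intg : S → S)
    (hder_add : ∀ f g : S, der (f + g) = der f + der g)
    (hleibniz : ∀ f g : S, der (f * g) = der f * g + f * der g)
    (hintg_add : ∀ f g : S, intg (f + g) = intg f + intg g)
    (hsection : ∀ f : S, der (intg f) = f)
    (hintg_lin : ∀ c f : S, der c = 0 → intg (c * f) = c * intg f)
    (Z : Set S) (hZ : ∀ z ∈ Z, der z = 0) :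
    (∀ f ∈ Ideal.span Z, der f ∈ Ideal.span Z) ∧
    (∀ f ∈ Ideal.span Z, intg f ∈ Ideal.span Z) ∧
    (∀ f : S, der f ∈ Ideal.span Z → f - (f - intg (der f)) ∈ Ideal.span Z) ∧
    (∀ f : S, der f ∈ Ideal.span Z → ∃ c : S, der c = 0 ∧ f - c ∈ Ideal.span Z) := by
  classical
  set J := Ideal.span Z with hJ
  have hder0 : der 0 = 0 := by
    have h := hder_add 0 0
    rw [add_zero] at h
    exact (add_left_cancel (by rw [← h, add_zero])).symm
  have hint0 : intg 0 = 0 := by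
    have h := hintg_add 0 0
    rw [add_zero] at h
    exact (add_left_cancel (by rw [← h, add_zero])).symm
  have hd : ∀ f ∈ J, der f ∈ J := by
    intro f hf
    induction hf using Submodule.span_induction with
    | mem z hz => rw [hZ z hz]; exact J.zero_mem
    | zero => rw [hder0]; exact J.zero_mem
    | add a b ha hb iha ihb => rw [hder_add]; exact J.add_mem iha ihb
    | smul a f hf ih =>
        have h1 : der (a • f) = der a * f + a * der f := by
          simpa [smul_eq_mul] using hleibniz a f
        rw [h1]
        exact J.add_mem (J.mul_mem_left _ hf) (J.mul_mem_left _ ih)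
  have hsum : ∀ (t : Finset S) (g : S → S), intg (∑ i ∈ t, g i) = ∑ i ∈ t, intg (g i) := by
    intro t g
    induction t using Finset.induction_on with
    | empty => simp [hint0]
    | insert _ _ hx ih => rw [Finset.sum_insert hx, hintg_add, ih, Finset.sum_insert hx]
  have hi : ∀ f ∈ J, intg f ∈ J := by
    intro f hf
    obtain ⟨c, hcs, rfl⟩ := Submodule.mem_span_set.mp hf
    rw [Finsupp.sum, hsum]
    apply Ideal.sum_mem
    intro z hzs
    have hz : z ∈ Z := hcs hzs
    have h2 : c z • z = z * c z := by rw [smul_eq_mul, mul_comm]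
    rw [h2, hintg_lin _ _ (hZ _ hz)]
    exact J.mul_mem_right _ (Ideal.subset_span hz)
  refine ⟨hd, hi, ?_, ?_⟩
  · intro f hf
    have : f - (f - intg (der f)) = intg (der f) := by ring
    rw [this]
    exact hi _ hf
  · intro f hf
    refine ⟨f - intg (der f), ?_, ?_⟩
    · have h1 : der (f - intg (der f)) + der (intg (der f)) = der f := by
        rw [← hder_add]; ring_nf
      rw [hsection] at h1
      exact add_right_cancel (h1.trans (zero_add (der f)).symm)
    · have : f - (f - intg (der f)) = intg (der f) := by ring
      rw [this]
      exact hi _ hf
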